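/- (Complement characterization) Let L be an n×n real symmetric positive semidefinite matrix and K = L(L+I)⁻¹. Then for every subset S ⊆ {1,…,n}, the sum of det(L_Y) over all subsets Y ⊆ {1,…,n} disjoint from S equals det((I − K)_S) · det(L + I); equivalently, the complement Ȳ = {1,…,n} \ Y of a subset drawn from the L-ensemble is a DPP with marginal kernel I − K, with P(S ⊆ Ȳ) = det((I−K)_S). -/

import Mathlib

open Matrix BigOperators

/-- The principal submatrix of `M` indexed by the subset `S`. -/
def principalSubmatrix {n : ℕ} (M : Matrix (Fin n) (Fin n) ℝ) (S : Finset (Fin n)) :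
    Matrix {i // i ∈ S} {i // i ∈ S} ℝ :=
  M.submatrix (fun i => (i : Fin n)) (fun i => (i : Fin n))

section Aux

variable {ι : Type*} [Fintype ι] [DecidableEq ι]

/-- Determinant of a matrix whose rows outside `Y` are those of the identity. -/
lemma det_piecewise_one (M : Matrix ι ι ℝ) (Y : Finset ι) :
    (Matrix.of (Y.piecewise (M : ι → ι → ℝ) (1 : Matrix ι ι ℝ))).det
      = (M.submatrix (fun i : {i // i ∈ Y} => (i : ι)) (fun i : {i // i ∈ Y} => (i : ι))).det := by
  classical
  let e : {i // i ∈ Y} ⊕ {i // i ∉ Y} ≃ ι := Equiv.sumCompl (· ∈ Y)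
  have h : (Matrix.of (Y.piecewise (M : ι → ι → ℝ) (1 : Matrix ι ι ℝ))).submatrix e e
      = Matrix.fromBlocks
          (M.submatrix (fun i : {i // i ∈ Y} => (i : ι)) (fun i : {i // i ∈ Y} => (i : ι)))
          (M.submatrix (fun i : {i // i ∈ Y} => (i : ι)) (fun i : {i // i ∉ Y} => (i : ι)))
          0 1 := by
    ext i j
    cases i with
    | inl a =>
      cases j with
      | inl b =>
        simp [e, Matrix.submatrix_apply, Finset.piecewise_eq_of_mem _ _ _ a.2, Finset.piecewise, a.2,
          Matrix.fromBlocks_apply₁₁]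
      | inr b =>
        simp [e, Matrix.submatrix_apply, Finset.piecewise_eq_of_mem _ _ _ a.2, Finset.piecewise, a.2,
          Matrix.fromBlocks_apply₁₂]
    | inr a =>
      cases j with
      | inl b =>
        have hab : (a : ι) ≠ (b : ι) := fun h => a.2 (h ▸ b.2)
        simp [e, Matrix.submatrix_apply, Finset.piecewise_eq_of_notMem _ _ _ a.2, Finset.piecewise, a.2,
          Matrix.fromBlocks_apply₂₁, Matrix.one_apply, hab]
      | inr b =>
        by_cases hab : a = b
        · subst hab
          simp [e, Matrix.submatrix_apply, Finset.piecewise_eq_of_notMem _ _ _ a.2, Finset.piecewise, a.2,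
            Matrix.fromBlocks_apply₂₂, Matrix.one_apply]
        · have hab' : (a : ι) ≠ (b : ι) := fun h => hab (Subtype.ext h)
          simp [e, Matrix.submatrix_apply, Finset.piecewise_eq_of_notMem _ _ _ a.2, Finset.piecewise, a.2,
            Matrix.fromBlocks_apply₂₂, Matrix.one_apply, hab, hab']
  calc (Matrix.of (Y.piecewise (M : ι → ι → ℝ) (1 : Matrix ι ι ℝ))).det
      = ((Matrix.of (Y.piecewise (M : ι → ι → ℝ) (1 : Matrix ι ι ℝ))).submatrix e e).det := by
        rw [Matrix.det_submatrix_equiv_self]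
    _ = _ := by rw [h, Matrix.det_fromBlocks_zero₂₁, Matrix.det_one, mul_one]

/-- Sum of all principal minors equals `det (M + 1)`. -/
lemma sum_principal_minors (M : Matrix ι ι ℝ) :
    ∑ Y : Finset ι,
        (M.submatrix (fun i : {i // i ∈ Y} => (i : ι)) (fun i : {i // i ∈ Y} => (i : ι))).det
      = (M + 1).det := by
  classical
  have h := (Matrix.detRowAlternating (R := ℝ) (n := ι)).toMultilinearMap.map_add_univ
    (fun i => M i) (fun i => (1 : Matrix ι ι ℝ) i)
  have hMadd : (M + 1 : Matrix ι ι ℝ).det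
      = ∑ Y : Finset ι,
        (Matrix.of (Y.piecewise (M : ι → ι → ℝ) (1 : Matrix ι ι ℝ))).det := by
    exact h
  rw [hMadd]
  exact Finset.sum_congr rfl fun Y _ => (det_piecewise_one M Y).symm

/-- Jacobi-type identity: `det A * det ((A⁻¹)_S) = det (A_{Sᶜ})`. -/
lemma jacobi (A : Matrix ι ι ℝ) (hA : IsUnit A.det) (p : ι → Prop) [DecidablePred p] :
    A.det * ((A⁻¹).submatrix (fun i : {i // p i} => (i : ι)) (fun i : {i // p i} => (i : ι))).det
      = (A.submatrix (fun i : {i // ¬ p i} => (i : ι)) (fun i : {i // ¬ p i} => (i : ι))).det := by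
  classical
  let e : {i // p i} ⊕ {i // ¬ p i} ≃ ι := Equiv.sumCompl p
  set B := A.submatrix e e with hB
  set C := (A⁻¹).submatrix e e with hC
  have hBC : B * C = 1 := by
    rw [hB, hC, Matrix.submatrix_mul_equiv, Matrix.mul_nonsing_inv _ hA,
      Matrix.submatrix_one_equiv]
  -- block decompositions
  have hBblocks : B = Matrix.fromBlocks B.toBlocks₁₁ B.toBlocks₁₂ B.toBlocks₂₁ B.toBlocks₂₂ :=
    (Matrix.fromBlocks_toBlocks B).symm
  have hCblocks : C = Matrix.fromBlocks C.toBlocks₁₁ C.toBlocks₁₂ C.toBlocks₂₁ C.toBlocks₂₂ :=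
    (Matrix.fromBlocks_toBlocks C).symm
  have hprod : Matrix.fromBlocks
      (B.toBlocks₁₁ * C.toBlocks₁₁ + B.toBlocks₁₂ * C.toBlocks₂₁)
      (B.toBlocks₁₁ * C.toBlocks₁₂ + B.toBlocks₁₂ * C.toBlocks₂₂)
      (B.toBlocks₂₁ * C.toBlocks₁₁ + B.toBlocks₂₂ * C.toBlocks₂₁)
      (B.toBlocks₂₁ * C.toBlocks₁₂ + B.toBlocks₂₂ * C.toBlocks₂₂)
      = Matrix.fromBlocks 1 0 0 1 := by
    rw [← Matrix.fromBlocks_multiply, ← hBblocks, ← hCblocks, hBC, Matrix.fromBlocks_one]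
  have h11 : B.toBlocks₁₁ * C.toBlocks₁₁ + B.toBlocks₁₂ * C.toBlocks₂₁ = 1 :=
    congrArg Matrix.toBlocks₁₁ hprod
  have h21 : B.toBlocks₂₁ * C.toBlocks₁₁ + B.toBlocks₂₂ * C.toBlocks₂₁ = 0 :=
    congrArg Matrix.toBlocks₂₁ hprod
  -- auxiliary matrix
  set N := Matrix.fromBlocks C.toBlocks₁₁ (0 : Matrix {i // p i} {i // ¬ p i} ℝ) C.toBlocks₂₁ (1 : Matrix {i // ¬ p i} {i // ¬ p i} ℝ) with hN
  have hBN : B * N = Matrix.fromBlocks 1 B.toBlocks₁₂ 0 B.toBlocks₂₂ := by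
    conv_lhs => rw [hBblocks, hN, Matrix.fromBlocks_multiply]
    rw [h11, h21]
    simp
  have hdet : B.det * N.det = B.toBlocks₂₂.det := by
    rw [← Matrix.det_mul, hBN, Matrix.det_fromBlocks_zero₂₁, Matrix.det_one, one_mul]
  have hNdet : N.det = C.toBlocks₁₁.det := by
    rw [hN, Matrix.det_fromBlocks_zero₁₂, Matrix.det_one, mul_one]
  have hBdet : B.det = A.det := Matrix.det_submatrix_equiv_self e A
  have hC11 : C.toBlocks₁₁
      = (A⁻¹).submatrix (fun i : {i // p i} => (i : ι)) (fun i : {i // p i} => (i : ι)) := rfl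
  have hB22 : B.toBlocks₂₂
      = A.submatrix (fun i : {i // ¬ p i} => (i : ι)) (fun i : {i // ¬ p i} => (i : ι)) := rfl
  rw [← hC11, ← hB22, ← hBdet, ← hdet, hNdet]

end Aux

/-- Complement characterization: the complement of a subset drawn from the
L-ensemble with kernel `L` is a DPP with marginal kernel `I − K`, where
`K = L (L + I)⁻¹`.  Explicitly, for every `S`,
`Σ_{Y : Y ∩ S = ∅} det(L_Y) = det((I − K)_S) · det(L + I)`,
i.e. `P(S ⊆ Ȳ) = det((I − K)_S)`. -/
theorem complement_characterization {n : ℕ} (L : Matrix (Fin n) (Fin n) ℝ)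
    (hL : L.PosSemidef) (S : Finset (Fin n)) :
    ∑ Y ∈ Finset.univ.filter (fun Y : Finset (Fin n) => Disjoint Y S),
        (principalSubmatrix L Y).det
      = (principalSubmatrix (1 - L * (L + 1)⁻¹) S).det * (L + 1).det := by
  classical
  have hpd : (L + 1).PosDef := Matrix.PosDef.posSemidef_add hL Matrix.PosDef.one
  have hunit : IsUnit (L + 1).det := hpd.det_pos.ne'.isUnit
  -- Step 1: `1 - L (L+1)⁻¹ = (L+1)⁻¹`.
  have hK : (1 : Matrix (Fin n) (Fin n) ℝ) - L * (L + 1)⁻¹ = (L + 1)⁻¹ := by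
    have h1 : (L + 1) * (L + 1)⁻¹ = 1 := Matrix.mul_nonsing_inv _ hunit
    calc (1 : Matrix (Fin n) (Fin n) ℝ) - L * (L + 1)⁻¹
        = (L + 1) * (L + 1)⁻¹ - L * (L + 1)⁻¹ := by rw [h1]
      _ = (L + 1 - L) * (L + 1)⁻¹ := by rw [Matrix.sub_mul]
      _ = (L + 1)⁻¹ := by rw [add_sub_cancel_left, Matrix.one_mul]
  -- Step 2: LHS is the sum over subsets of the complement subtype.
  set N : Matrix {i // ¬ i ∈ S} {i // ¬ i ∈ S} ℝ :=
    L.submatrix (fun i : {i // ¬ i ∈ S} => (i : Fin n)) (fun i : {i // ¬ i ∈ S} => (i : Fin n))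
    with hNdef
  have hLHS : ∑ Y ∈ Finset.univ.filter (fun Y : Finset (Fin n) => Disjoint Y S),
      (principalSubmatrix L Y).det
      = ∑ Y : Finset {i // ¬ i ∈ S},
        (N.submatrix (fun i : {i // i ∈ Y} => (i : {i // ¬ i ∈ S}))
          (fun i : {i // i ∈ Y} => (i : {i // ¬ i ∈ S}))).det := by
    refine Finset.sum_nbij' (fun Y => Y.preimage (fun i : {i // ¬ i ∈ S} => (i : Fin n))
        (Subtype.val_injective.injOn)) (fun Y => Y.map ⟨Subtype.val, Subtype.val_injective⟩)
        ?_ ?_ ?_ ?_ ?_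
    · intro Y _; exact Finset.mem_univ _
    · intro Y _
      simp only [Finset.mem_filter, Finset.mem_univ, true_and]
      rw [Finset.disjoint_left]
      rintro a ha haS
      rcases Finset.mem_map.mp ha with ⟨b, _, rfl⟩
      exact b.2 haS
    · intro Y hY
      simp only [Finset.mem_filter, Finset.mem_univ, true_and] at hY
      ext a
      simp only [Finset.mem_map, Finset.mem_preimage, Function.Embedding.coeFn_mk]
      constructor
      · rintro ⟨b, hb, rfl⟩; exact hb
      · intro ha
        exact ⟨⟨a, fun haS => (Finset.disjoint_left.mp hY ha) haS⟩, ha, rfl⟩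
    · intro Y _
      ext b
      simp only [Finset.mem_preimage, Finset.mem_map, Function.Embedding.coeFn_mk]
      constructor
      · rintro ⟨c, hc, hcb⟩
        have : c = b := Subtype.ext hcb
        exact this ▸ hc
      · intro hb
        exact ⟨b, hb, rfl⟩
    · intro Y hY
      simp only [Finset.mem_filter, Finset.mem_univ, true_and] at hY
      -- equality of determinants via an index equivalence
      set Y' := Y.preimage (fun i : {i // ¬ i ∈ S} => (i : Fin n)) (Subtype.val_injective.injOn)
        with hY'def
      have hmem : ∀ a : {i // ¬ i ∈ S}, a ∈ Y' ↔ (a : Fin n) ∈ Y := by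
        intro a; simp [hY'def]
      let e : {i // i ∈ Y} ≃ {i // i ∈ Y'} :=
        { toFun := fun i => ⟨⟨(i : Fin n), fun hiS =>
            (Finset.disjoint_left.mp hY i.2) hiS⟩, (hmem _).mpr i.2⟩
          invFun := fun i => ⟨((i : {i // ¬ i ∈ S}) : Fin n), (hmem _).mp i.2⟩
          left_inv := fun i => rfl
          right_inv := fun i => rfl }
      have : principalSubmatrix L Y
          = (N.submatrix (fun i : {i // i ∈ Y'} => (i : {i // ¬ i ∈ S}))
              (fun i : {i // i ∈ Y'} => (i : {i // ¬ i ∈ S}))).submatrix e e := by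
        ext i j; rfl
      rw [this, Matrix.det_submatrix_equiv_self]
  -- Step 3: the inner sum equals `det (N + 1)`.
  rw [hLHS, sum_principal_minors N]
  -- Step 4: `N + 1 = (L + 1)` restricted to the complement.
  have hN1 : N + 1 = (L + 1).submatrix (fun i : {i // ¬ i ∈ S} => (i : Fin n))
      (fun i : {i // ¬ i ∈ S} => (i : Fin n)) := by
    ext i j
    by_cases hij : i = j
    · subst hij
      simp [hNdef, Matrix.submatrix_apply, Matrix.one_apply, Matrix.add_apply]
    · have hij' : (i : Fin n) ≠ (j : Fin n) := fun h => hij (Subtype.ext h)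
      simp [hNdef, Matrix.submatrix_apply, Matrix.one_apply, Matrix.add_apply, hij, hij']
  -- Step 5: Jacobi identity.
  have hj := jacobi (L + 1) hunit (fun i => i ∈ S)
  rw [hN1, ← hj, hK]
  rw [mul_comm]
  congr 1
  unfold principalSubmatrix
  congr!
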